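/- Consider the iteration ξ⁽⁰⁾ = 0, ξ⁽ⁿ⁺¹⁾ = T⁻¹(G − ξ⁽ⁿ⁾ Gᵀ conj(ξ⁽ⁿ⁾)), where T(ξ) = ξL₂ − L₁conj(ξ) is invertible. If ρ := 4‖T⁻¹(G)‖·‖T⁻¹‖·‖G‖ < 1, then ‖ξ⁽ⁿ⁾‖ ≤ 2‖T⁻¹(G)‖ for all n ≥ 1, ‖ξ⁽ⁿ⁺¹⁾ − ξ⁽ⁿ⁾‖ ≤ ρ‖ξ⁽ⁿ⁾ − ξ⁽ⁿ⁻¹⁾‖ for n ≥ 1, and the iteration converges to a solution ξ of G + L₁conj(ξ) − ξL₂ − ξGᵀconj(ξ) = 0 with ‖ξ − ξ⁽ⁿ⁾‖ ≤ ρⁿ/(1−ρ)·‖ξ⁽¹⁾‖. -/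

import Mathlib

open Matrix Filter
open scoped Matrix.Norms.L2Operator

set_option maxHeartbeats 800000
open Matrix Filter
open scoped Matrix.Norms.L2Operator

lemma l2_opNorm_map_conj_le' {m n : ℕ} (A : Matrix (Fin m) (Fin n) ℂ) :
    ‖A.map (starRingEnd ℂ)‖ ≤ ‖A‖ := by
  rw [Matrix.l2_opNorm_def]
  refine ContinuousLinearMap.opNorm_le_bound _ (norm_nonneg A) fun x => ?_
  set y : EuclideanSpace ℂ (Fin n) := (WithLp.equiv 2 _).symm (fun i => starRingEnd ℂ (x i)) with hy
  have hynorm : ‖y‖ = ‖x‖ := by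
    simp [EuclideanSpace.norm_eq, hy]
  set w : EuclideanSpace ℂ (Fin m) := (EuclideanSpace.equiv (Fin m) ℂ).symm (A *ᵥ (WithLp.equiv 2 _ y)) with hw
  set v : EuclideanSpace ℂ (Fin m) := (WithLp.equiv 2 _).symm (fun i => starRingEnd ℂ (w i)) with hv
  have hval : ((Matrix.toEuclideanLin.trans LinearMap.toContinuousLinearMap)
      (A.map (starRingEnd ℂ))) x = v := by
    ext i
    show (A.map (starRingEnd ℂ) *ᵥ (WithLp.equiv 2 _ x)) i = _
    simp [Matrix.mulVec, dotProduct, map_sum, hy, hv, hw]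
  have h2 : ‖v‖ = ‖w‖ := by simp [EuclideanSpace.norm_eq, hv]
  rw [hval, h2, ← hynorm]
  exact Matrix.l2_opNorm_mulVec A y
lemma l2_opNorm_map_conj {m n : ℕ} (A : Matrix (Fin m) (Fin n) ℂ) :
    ‖A.map (starRingEnd ℂ)‖ = ‖A‖ := by
  refine le_antisymm (l2_opNorm_map_conj_le' A) ?_
  have h : (A.map (starRingEnd ℂ)).map (starRingEnd ℂ) = A := by
    ext i j; simp
  conv_lhs => rw [← h]
  exact l2_opNorm_map_conj_le' _
lemma l2_opNorm_transpose {m n : ℕ} (A : Matrix (Fin m) (Fin n) ℂ) :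
    ‖Aᵀ‖ = ‖A‖ := by
  have h : Aᵀ = (A.map (starRingEnd ℂ))ᴴ := by ext i j; simp
  rw [h, Matrix.l2_opNorm_conjTranspose, l2_opNorm_map_conj]


/-- The fixed-point iteration `ξ⁽⁰⁾ = 0`, `ξ⁽ⁿ⁺¹⁾ = T⁻¹(G − ξ⁽ⁿ⁾ Gᵀ conj(ξ⁽ⁿ⁾))` for
`T(ξ) = ξL₂ − L₁conj(ξ)` invertible with `‖T⁻¹‖ ≤ C`: if `ρ = 4‖T⁻¹(G)‖·C·‖G‖ < 1` then the
iterates are bounded by `2‖T⁻¹(G)‖`, consecutive differences contract with ratio `ρ`, and the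
iteration converges to a solution `ξ` of `G + L₁conj(ξ) − ξL₂ − ξGᵀconj(ξ) = 0` with
`‖ξ − ξ⁽ⁿ⁾‖ ≤ ρⁿ/(1−ρ)·‖ξ⁽¹⁾‖`. -/
theorem xi_iteration_convergence (n₁ n₂ : ℕ)
    (L₁ : Matrix (Fin n₁) (Fin n₁) ℂ) (L₂ : Matrix (Fin n₂) (Fin n₂) ℂ)
    (hL₁ : L₁ᵀ = L₁) (hL₂ : L₂ᵀ = L₂)
    (G : Matrix (Fin n₁) (Fin n₂) ℂ)
    (T Tinv : Matrix (Fin n₁) (Fin n₂) ℂ → Matrix (Fin n₁) (Fin n₂) ℂ)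
    (hT : ∀ X, T X = X * L₂ - L₁ * X.map (starRingEnd ℂ))
    (hTinv₁ : ∀ Y, T (Tinv Y) = Y) (hTinv₂ : ∀ X, Tinv (T X) = X)
    (C : ℝ) (hC : ∀ Y, ‖Tinv Y‖ ≤ C * ‖Y‖)
    (ρ : ℝ) (hρdef : ρ = 4 * ‖Tinv G‖ * C * ‖G‖) (hρ : ρ < 1)
    (ξseq : ℕ → Matrix (Fin n₁) (Fin n₂) ℂ) (h0 : ξseq 0 = 0)
    (hrec : ∀ n, ξseq (n + 1) = Tinv (G - ξseq n * Gᵀ * (ξseq n).map (starRingEnd ℂ))) :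
    (∀ n, 1 ≤ n → ‖ξseq n‖ ≤ 2 * ‖Tinv G‖) ∧
    (∀ n, 1 ≤ n → ‖ξseq (n + 1) - ξseq n‖ ≤ ρ * ‖ξseq n - ξseq (n - 1)‖) ∧
    ∃ ξ : Matrix (Fin n₁) (Fin n₂) ℂ,
      Tendsto ξseq atTop (nhds ξ) ∧
      G + L₁ * ξ.map (starRingEnd ℂ) - ξ * L₂ - ξ * Gᵀ * ξ.map (starRingEnd ℂ) = 0 ∧
      ∀ n, ‖ξ - ξseq n‖ ≤ ρ ^ n / (1 - ρ) * ‖ξseq 1‖ := by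
  by_cases hC0 : 0 ≤ C
  swap
  · -- degenerate case: every matrix is zero
    push_neg at hC0
    have hz : ∀ X : Matrix (Fin n₁) (Fin n₂) ℂ, X = 0 := by
      intro X
      have h1 := hC (T X)
      rw [hTinv₂] at h1
      have h2 : C * ‖T X‖ ≤ 0 := mul_nonpos_of_nonpos_of_nonneg hC0.le (norm_nonneg _)
      exact norm_le_zero_iff.mp (h1.trans h2)
    have hρ0 : ρ = 0 := by
      rw [hρdef, hz (Tinv G), hz G]; simp
    refine ⟨fun n _ => ?_, fun n _ => ?_, 0, ?_, ?_, fun n => ?_⟩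
    · rw [hz (ξseq n), norm_zero]; positivity
    · rw [hρ0, hz (ξseq (n+1)), hz (ξseq n)]; simp
    · have : ξseq = fun _ => 0 := funext fun n => hz _
      rw [this]; exact tendsto_const_nhds
    · exact hz _
    · simp [hz (ξseq n), hz (ξseq 1)]
  -- main case
  set a : ℝ := ‖Tinv G‖ with ha
  have ha0 : 0 ≤ a := norm_nonneg _
  have hρ0 : 0 ≤ ρ := by rw [hρdef]; positivity
  have hTadd : ∀ X Y, T (X - Y) = T X - T Y := by
    intro X Y
    have hmap : (X - Y).map (starRingEnd ℂ) = X.map (starRingEnd ℂ) - Y.map (starRingEnd ℂ) := by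
      ext i j; simp
    simp only [hT, hmap, Matrix.sub_mul, Matrix.mul_sub]
    abel
  have hTinvsub : ∀ X Y, Tinv (X - Y) = Tinv X - Tinv Y := by
    intro X Y
    have h : T (Tinv X - Tinv Y) = X - Y := by rw [hTadd, hTinv₁, hTinv₁]
    rw [← h, hTinv₂]
  have hP : ∀ X Z : Matrix (Fin n₁) (Fin n₂) ℂ,
      ‖X * Gᵀ * Z.map (starRingEnd ℂ)‖ ≤ ‖X‖ * ‖G‖ * ‖Z‖ := by
    intro X Z
    calc ‖X * Gᵀ * Z.map (starRingEnd ℂ)‖ ≤ ‖X * Gᵀ‖ * ‖Z.map (starRingEnd ℂ)‖ :=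
          Matrix.l2_opNorm_mul _ _
      _ ≤ (‖X‖ * ‖Gᵀ‖) * ‖Z.map (starRingEnd ℂ)‖ :=
          mul_le_mul_of_nonneg_right (Matrix.l2_opNorm_mul _ _) (norm_nonneg _)
      _ = ‖X‖ * ‖G‖ * ‖Z‖ := by rw [l2_opNorm_transpose, l2_opNorm_map_conj]
  have hbound0 : ∀ n, ‖ξseq n‖ ≤ 2 * a := by
    intro n
    induction n with
    | zero => rw [h0, norm_zero]; positivity
    | succ n ih =>
      rw [hrec n, hTinvsub]
      have h1 : ‖Tinv G - Tinv (ξseq n * Gᵀ * (ξseq n).map (starRingEnd ℂ))‖ ≤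
          a + C * (‖ξseq n‖ * ‖G‖ * ‖ξseq n‖) :=
        (norm_sub_le _ _).trans
          (add_le_add le_rfl ((hC _).trans (mul_le_mul_of_nonneg_left (hP _ _) hC0)))
      have hbb : ‖ξseq n‖ * ‖ξseq n‖ ≤ (2*a) * (2*a) :=
        mul_le_mul ih ih (norm_nonneg _) (by positivity)
      have h2 : ‖ξseq n‖ * ‖G‖ * ‖ξseq n‖ ≤ (2*a) * ‖G‖ * (2*a) := by
        nlinarith [norm_nonneg G, hbb]
      have h3 : C * ((2*a) * ‖G‖ * (2*a)) = a * ρ := by rw [hρdef]; ring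
      have h4 : a * ρ ≤ a := by nlinarith
      have h5 := mul_le_mul_of_nonneg_left h2 hC0
      refine h1.trans ?_
      linarith
  have hdiff : ∀ X Y : Matrix (Fin n₁) (Fin n₂) ℂ,
      X * Gᵀ * X.map (starRingEnd ℂ) - Y * Gᵀ * Y.map (starRingEnd ℂ)
        = (X - Y) * Gᵀ * X.map (starRingEnd ℂ) + Y * Gᵀ * ((X - Y).map (starRingEnd ℂ)) := by
    intro X Y
    have hmap : (X - Y).map (starRingEnd ℂ) = X.map (starRingEnd ℂ) - Y.map (starRingEnd ℂ) := by
      ext i j; simp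
    rw [hmap]
    simp only [Matrix.sub_mul, Matrix.mul_sub]
    abel
  have hstep : ∀ n m : ℕ, ‖ξseq (n+1) - ξseq (m+1)‖ ≤ ρ * ‖ξseq n - ξseq m‖ := by
    intro n m
    rw [hrec n, hrec m, ← hTinvsub]
    have he : (G - ξseq n * Gᵀ * (ξseq n).map (starRingEnd ℂ))
        - (G - ξseq m * Gᵀ * (ξseq m).map (starRingEnd ℂ))
        = ξseq m * Gᵀ * (ξseq m).map (starRingEnd ℂ)
          - ξseq n * Gᵀ * (ξseq n).map (starRingEnd ℂ) := by abel
    rw [he, hdiff]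
    have hb1 : ‖(ξseq m - ξseq n) * Gᵀ * (ξseq m).map (starRingEnd ℂ)‖
        ≤ ‖ξseq m - ξseq n‖ * ‖G‖ * (2*a) :=
      (hP _ _).trans (mul_le_mul_of_nonneg_left (hbound0 m)
        (mul_nonneg (norm_nonneg _) (norm_nonneg _)))
    have hb2 : ‖ξseq n * Gᵀ * ((ξseq m - ξseq n).map (starRingEnd ℂ))‖
        ≤ (2*a) * ‖G‖ * ‖ξseq m - ξseq n‖ :=
      (hP _ _).trans (mul_le_mul_of_nonneg_right
        (mul_le_mul_of_nonneg_right (hbound0 n) (norm_nonneg G)) (norm_nonneg _))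
    refine (hC _).trans ?_
    have hsum := (norm_add_le _ _).trans (add_le_add hb1 hb2)
    have h5 := mul_le_mul_of_nonneg_left hsum hC0
    rw [norm_sub_rev (ξseq n) (ξseq m)]
    refine h5.trans (le_of_eq ?_)
    rw [hρdef]; ring
  have hgeo : ∀ n, dist (ξseq n) (ξseq (n+1)) ≤ ‖ξseq 1‖ * ρ ^ n := by
    intro n
    induction n with
    | zero => simp [dist_eq_norm, h0, norm_sub_rev (0 : Matrix (Fin n₁) (Fin n₂) ℂ)]
    | succ n ih =>
      rw [dist_eq_norm, norm_sub_rev]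
      refine (hstep (n+1) n).trans ?_
      rw [dist_eq_norm, norm_sub_rev] at ih
      calc ρ * ‖ξseq (n+1) - ξseq n‖ ≤ ρ * (‖ξseq 1‖ * ρ ^ n) :=
            mul_le_mul_of_nonneg_left ih hρ0
        _ = ‖ξseq 1‖ * ρ ^ (n+1) := by ring
  have hcauchy : CauchySeq ξseq := cauchySeq_of_le_geometric ρ ‖ξseq 1‖ hρ hgeo
  obtain ⟨ξ, hξ⟩ := cauchySeq_tendsto_of_complete hcauchy
  have htend0 : Tendsto (fun n => ‖ξseq n - ξ‖) atTop (nhds 0) :=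
    tendsto_iff_norm_sub_tendsto_zero.mp hξ
  set K : ℝ := ‖G‖ * ‖ξ‖ + (2*a) * ‖G‖ with hK
  have hA : Tendsto (fun n => G - ξseq n * Gᵀ * (ξseq n).map (starRingEnd ℂ)) atTop
      (nhds (G - ξ * Gᵀ * ξ.map (starRingEnd ℂ))) := by
    rw [tendsto_iff_norm_sub_tendsto_zero]
    have hb : ∀ n, ‖(G - ξseq n * Gᵀ * (ξseq n).map (starRingEnd ℂ))
        - (G - ξ * Gᵀ * ξ.map (starRingEnd ℂ))‖ ≤ K * ‖ξseq n - ξ‖ := by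
      intro n
      have he : (G - ξseq n * Gᵀ * (ξseq n).map (starRingEnd ℂ))
          - (G - ξ * Gᵀ * ξ.map (starRingEnd ℂ))
          = ξ * Gᵀ * ξ.map (starRingEnd ℂ) - ξseq n * Gᵀ * (ξseq n).map (starRingEnd ℂ) := by
        abel
      rw [he, hdiff]
      have h1 := hP (ξ - ξseq n) ξ
      have h2 := hP (ξseq n) (ξ - ξseq n)
      refine (norm_add_le _ _).trans ((add_le_add h1 h2).trans ?_)
      rw [norm_sub_rev ξ (ξseq n)]
      have h4 := hbound0 n
      have hnn : (0:ℝ) ≤ ‖ξseq n - ξ‖ := norm_nonneg _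
      have hnG : (0:ℝ) ≤ ‖G‖ := norm_nonneg _
      have hnx : (0:ℝ) ≤ ‖ξ‖ := norm_nonneg _
      have h7 : ‖ξseq n‖ * ‖G‖ * ‖ξseq n - ξ‖ ≤ (2*a) * ‖G‖ * ‖ξseq n - ξ‖ :=
        mul_le_mul_of_nonneg_right (mul_le_mul_of_nonneg_right h4 hnG) hnn
      have h8 : (‖G‖ * ‖ξ‖ + (2*a) * ‖G‖) * ‖ξseq n - ξ‖
          = ‖ξseq n - ξ‖ * ‖G‖ * ‖ξ‖ + (2*a) * ‖G‖ * ‖ξseq n - ξ‖ := by ring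
      rw [hK, h8]
      linarith
    refine squeeze_zero (fun n => norm_nonneg _) hb ?_
    simpa using htend0.const_mul K
  have hTinvlim : Tendsto (fun n => ξseq (n+1)) atTop
      (nhds (Tinv (G - ξ * Gᵀ * ξ.map (starRingEnd ℂ)))) := by
    rw [tendsto_iff_norm_sub_tendsto_zero]
    have hb : ∀ n, ‖ξseq (n+1) - Tinv (G - ξ * Gᵀ * ξ.map (starRingEnd ℂ))‖
        ≤ C * ‖(G - ξseq n * Gᵀ * (ξseq n).map (starRingEnd ℂ))
            - (G - ξ * Gᵀ * ξ.map (starRingEnd ℂ))‖ := by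
      intro n
      rw [hrec n, ← hTinvsub]
      exact hC _
    refine squeeze_zero (fun n => norm_nonneg _) hb ?_
    have h6 := tendsto_iff_norm_sub_tendsto_zero.mp hA
    simpa using h6.const_mul C
  have hlim' : Tendsto (fun n => ξseq (n+1)) atTop (nhds ξ) :=
    hξ.comp (tendsto_add_atTop_nat 1)
  have hfix : ξ = Tinv (G - ξ * Gᵀ * ξ.map (starRingEnd ℂ)) :=
    tendsto_nhds_unique hlim' hTinvlim
  have hTeq : ξ * L₂ - L₁ * ξ.map (starRingEnd ℂ) = G - ξ * Gᵀ * ξ.map (starRingEnd ℂ) := by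
    rw [← hT]
    conv_lhs => rw [hfix]
    exact hTinv₁ _
  have hdistb := dist_le_of_le_geometric_of_tendsto ρ ‖ξseq 1‖ hρ hgeo hξ
  refine ⟨fun n _ => hbound0 n, fun n hn => ?_, ξ, hξ, ?_, fun n => ?_⟩
  · obtain ⟨m, rfl⟩ : ∃ m, n = m + 1 := ⟨n - 1, by omega⟩
    simpa using hstep (m+1) m
  · have he : G + L₁ * ξ.map (starRingEnd ℂ) - ξ * L₂ - ξ * Gᵀ * ξ.map (starRingEnd ℂ)
        = (G - ξ * Gᵀ * ξ.map (starRingEnd ℂ)) - (ξ * L₂ - L₁ * ξ.map (starRingEnd ℂ)) := by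
      abel
    rw [he, ← hTeq, sub_self]
  · have h := hdistb n
    rw [dist_eq_norm] at h
    rw [norm_sub_rev]
    refine h.trans (le_of_eq ?_)
    ring
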